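/- Let C be a CSS code and let w ≥ 1 and l be integers with l ≥ max(2, q_Z) satisfying 2·e·binom(q_Z, w+1)·(1/l)^{w+1}·min(q_Z·w_Z, N)·l ≤ 1, where e is Euler's number. Then there exists a choice function κ from the rows of H_Z to {1,…,l} such that the thickened code C̃ satisfies q̃_Z ≤ max(w+2, w_X), i.e., every column of H̃_Z has weight at most max(w+2, w_X). -/

import Mathlib

open Matrix

/-- The weight of a vector over `F₂`: the number of nonzero entries. -/
def wt {α : Type*} [Fintype α] (v : α → ZMod 2) : ℕ :=
  (Finset.univ.filter fun j => v j ≠ 0).card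

/-- Maximum weight of a row of a matrix over `F₂`. -/
def maxRowW {m α : Type*} [Fintype m] [Fintype α] (M : Matrix m α (ZMod 2)) : ℕ :=
  Finset.univ.sup fun i => wt (M i)

/-- Maximum weight of a column of a matrix over `F₂`. -/
def maxColW {m α : Type*} [Fintype m] [Fintype α] (M : Matrix m α (ZMod 2)) : ℕ :=
  Finset.univ.sup fun j => wt fun i => M i j

/-- Total number of nonzero entries of a matrix over `F₂`. -/
def totW {m α : Type*} [Fintype m] [Fintype α] (M : Matrix m α (ZMod 2)) : ℕ :=
  ∑ i, wt (M i)

variable {N nX nZ : ℕ}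

/-- Qubits of the thickened code: qubits `(q,k)` for `q` a qubit of `C` and `k ∈ {1,…,l}`
(0-indexed below), together with qubits `[s,k]` for `s` a row of `H_X` and
`k ∈ {1,…,l−1}`. -/
abbrev TQubit (N nX l : ℕ) : Type := (Fin N × Fin l) ⊕ (Fin nX × Fin (l - 1))

/-- Row index type of the Z-type generator matrix of the thickened code: one generator for
each row of `H_Z` (type (i)), and one for each pair of a qubit `q` of `C` and
`k ∈ {1,…,l−1}` (type (ii)). -/
abbrev TZIdx (N nZ l : ℕ) : Type := Fin nZ ⊕ (Fin N × Fin (l - 1))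

/-- X-type generator matrix of the thickened code: for each row `s` of `HX` with support
`{q₁,…,q_w}` and each `k ∈ {1,…,l}` (0-indexed here), one generator with support
`{(q₁,k),…,(q_w,k)} ∪ {[s,k−1],[s,k]}` (with `[s,0]`, `[s,l]` omitted at the ends). -/
def thickHX (HX : Matrix (Fin nX) (Fin N) (ZMod 2)) (l : ℕ) :
    Matrix (Fin nX × Fin l) (TQubit N nX l) (ZMod 2) := fun s j =>
  match s, j with
  | (s, k), Sum.inl (p, k') => if k' = k then HX s p else 0
  | (s, k), Sum.inr (s', k') =>
      if s' = s ∧ ((k'.val = k.val) ∨ (k'.val + 1 = k.val)) then 1 else 0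

/-- Z-type generator matrix of the thickened code with choice function `κ`:
(i) for each row `r` of `HZ` with support `{q₁,…,q_w}`, one generator with support
`{(q₁,κ(r)),…,(q_w,κ(r))}`; (ii) for each qubit `q` of `C` and each `k ∈ {1,…,l−1}`
(0-indexed here), one generator with support
`{(q,k),(q,k+1)} ∪ {[s,k] : row s of HX acts on q}`. -/
def thickHZ (HX : Matrix (Fin nX) (Fin N) (ZMod 2)) (HZ : Matrix (Fin nZ) (Fin N) (ZMod 2))
    (l : ℕ) (κ : Fin nZ → Fin l) :
    Matrix (TZIdx N nZ l) (TQubit N nX l) (ZMod 2) := fun r j =>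
  match r, j with
  | Sum.inl R, Sum.inl (p, k) => if k = κ R then HZ R p else 0
  | Sum.inl _, Sum.inr _ => 0
  | Sum.inr (p, k), Sum.inl (p', k') =>
      if p' = p ∧ ((k'.val = k.val) ∨ (k'.val = k.val + 1)) then 1 else 0
  | Sum.inr (p, k), Sum.inr (s, k') => if k'.val = k.val then HX s p else 0

set_option linter.unusedSectionVars false
set_option maxHeartbeats 1000000




open Finset

section LLL

variable {ν V : Type*} [Fintype ν] [DecidableEq ν] [Fintype V] [DecidableEq V]

def Det (U : Finset ν) (A : Finset (ν → V)) : Prop :=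
  ∀ f g : ν → V, (∀ i ∈ U, f i = g i) → (f ∈ A ↔ g ∈ A)

def merge (U : Finset ν) (f g : ν → V) : ν → V := fun i => if i ∈ U then f i else g i

lemma merge_merge (U : Finset ν) (f g : ν → V) :
    merge U (merge U f g) (merge U g f) = f := by
  funext i; simp only [merge]; split <;> simp_all

lemma indep (U W : Finset ν) (hUW : Disjoint U W) (A B : Finset (ν → V))
    (hA : Det U A) (hB : Det W B) :
    (A ∩ B).card * (univ : Finset (ν → V)).card = A.card * B.card := by
  rw [← card_product, ← card_product]
  apply Finset.card_bij (fun x _ => (merge U x.1 x.2, merge U x.2 x.1))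
  · rintro ⟨h, h'⟩ hx
    simp only [mem_product, mem_inter] at hx ⊢
    obtain ⟨⟨hA1, hB1⟩, -⟩ := hx
    constructor
    · exact (hA (merge U h h') h (fun i hi => by simp [merge, hi])).mpr hA1
    · refine (hB (merge U h' h) h (fun i hi => ?_)).mpr hB1
      have : i ∉ U := fun hiU => (Finset.disjoint_left.mp hUW) hiU hi
      simp [merge, this]
  · rintro ⟨h, h'⟩ hx ⟨g, g'⟩ hy heq
    simp only [Prod.mk.injEq] at heq
    obtain ⟨e1, e2⟩ := heq
    have : ∀ i, h i = g i ∧ h' i = g' i := by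
      intro i
      have t1 := congrFun e1 i
      have t2 := congrFun e2 i
      simp only [merge] at t1 t2
      by_cases hi : i ∈ U <;> simp_all
    exact Prod.ext (funext fun i => (this i).1) (funext fun i => (this i).2)
  · rintro ⟨f, g⟩ hx
    simp only [mem_product] at hx
    refine ⟨(merge U f g, merge U g f), ?_, ?_⟩
    · simp only [mem_product, mem_inter, mem_univ, and_true]
      refine ⟨?_, ?_⟩
      · exact (hA (merge U f g) f (fun i hi => by simp [merge, hi])).mpr hx.1
      · refine (hB (merge U f g) g (fun i hi => ?_)).mpr hx.2
        have : i ∉ U := fun hiU => (Finset.disjoint_left.mp hUW) hiU hi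
        simp [merge, this]
    · simp [merge_merge]

variable {ι : Type*} [Fintype ι] [DecidableEq ι]

/-- The set of assignments avoiding all events indexed by `S`. -/
def good (E : ι → Finset (ν → V)) (S : Finset ι) : Finset (ν → V) :=
  univ.filter fun f => ∀ j ∈ S, f ∉ E j

lemma good_insert (E : ι → Finset (ν → V)) (a : ι) (S : Finset ι) :
    good E (insert a S) = good E S \ E a := by
  ext f
  simp only [good, mem_filter, mem_univ, true_and, mem_sdiff, mem_insert]
  constructor
  · intro h; exact ⟨fun j hj => h j (Or.inr hj), h a (Or.inl rfl)⟩
  · rintro ⟨h1, h2⟩ j hj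
    rcases hj with rfl | hj
    · exact h2
    · exact h1 j hj

lemma good_anti (E : ι → Finset (ν → V)) {S T : Finset ι} (h : S ⊆ T) :
    good E T ⊆ good E S := by
  intro f hf
  simp only [good, mem_filter, mem_univ, true_and] at hf ⊢
  exact fun j hj => hf j (h hj)

lemma good_card_insert (E : ι → Finset (ν → V)) (a : ι) (S : Finset ι) :
    ((good E (insert a S)).card : ℝ)
      = (good E S).card - ((E a ∩ good E S).card : ℝ) := by
  have h := Finset.card_sdiff_add_card_inter (good E S) (E a)
  rw [good_insert, Finset.inter_comm]
  have h2 : (((good E S \ E a).card : ℝ)) + ((good E S ∩ E a).card : ℝ)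
      = ((good E S).card : ℝ) := by exact_mod_cast h
  linarith

theorem LLL [Nonempty V]
    (vbl : ι → Finset ν) (E : ι → Finset (ν → V))
    (hdet : ∀ j, Det (vbl j) (E j))
    (D : ℕ) (hD : 1 ≤ D)
    (hdeg : ∀ j : ι, (univ.filter fun i => i ≠ j ∧ ¬ Disjoint (vbl i) (vbl j)).card ≤ D)
    (hp : ∀ j, ((E j).card : ℝ) * (Real.exp 1 * ((D : ℝ) + 1)) ≤ (univ : Finset (ν → V)).card) :
    ∃ f : ν → V, ∀ j, f ∉ E j := by
  classical
  set x : ℝ := 1 / ((D : ℝ) + 1) with hx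
  have hD1pos : (0:ℝ) < (D:ℝ) + 1 := by positivity
  have hDpos : (0:ℝ) < (D:ℝ) := by exact_mod_cast hD
  have hD1 : (1:ℝ) ≤ (D:ℝ) := by exact_mod_cast hD
  have hxlt : x < 1 := by rw [hx, div_lt_one hD1pos]; linarith
  have hxpos : 0 < x := by rw [hx]; positivity
  have h1x : (0:ℝ) < 1 - x := by linarith
  have hepos : (0:ℝ) < Real.exp 1 := Real.exp_pos 1
  have he1 : (1:ℝ) ≤ Real.exp 1 := by
    have := Real.add_one_le_exp (1:ℝ); linarith
  set Ω : ℝ := ((univ : Finset (ν → V)).card : ℝ) with hΩ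
  have hΩpos : 0 < Ω := by
    rw [hΩ]
    exact_mod_cast Finset.card_pos.mpr ⟨Classical.arbitrary (ν → V), mem_univ _⟩
  -- (1-x)^D ≥ exp (-1)
  have hpow : Real.exp (-1) ≤ (1 - x) ^ D := by
    have ht : (0:ℝ) < 1/(D:ℝ) := by positivity
    have h2 : 1 + 1/(D:ℝ) ≤ Real.exp (1/(D:ℝ)) := by
      have := Real.add_one_le_exp (1/(D:ℝ)); linarith
    have h4 : Real.exp (-(1/(D:ℝ))) ≤ 1 - x := by
      rw [Real.exp_neg]
      have h5 : (Real.exp (1/(D:ℝ)))⁻¹ ≤ (1 + 1/(D:ℝ))⁻¹ :=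
        inv_anti₀ (by positivity) h2
      have h6 : (1 + 1/(D:ℝ))⁻¹ = 1 - x := by
        rw [hx]; field_simp; ring
      linarith [h6 ▸ h5]
    calc Real.exp (-1) = Real.exp (-(1/(D:ℝ))) ^ D := by
          rw [← Real.exp_nat_mul]; congr 1; field_simp
      _ ≤ (1 - x) ^ D := pow_le_pow_left₀ (Real.exp_pos _).le h4 D
  -- the key induction
  have key : ∀ n : ℕ, ∀ S : Finset ι, S.card ≤ n → ∀ j, j ∉ S →
      ((E j ∩ good E S).card : ℝ) * ((D:ℝ) + 1) ≤ (good E S).card := by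
    intro n
    induction n with
    | zero =>
      intro S hS j _
      have hSe : S = ∅ := Finset.card_eq_zero.mp (Nat.le_zero.mp hS)
      subst hSe
      have hg : good E (∅ : Finset ι) = univ := by simp [good]
      rw [hg, inter_univ]
      have hpj := hp j
      have hEnn : (0:ℝ) ≤ ((E j).card : ℝ) := Nat.cast_nonneg _
      nlinarith
    | succ n IH =>
      intro S hS j hj
      by_cases hc : S.card ≤ n
      · exact IH S hc j hj
      · set S₁ : Finset ι := S.filter (fun i => ¬ Disjoint (vbl i) (vbl j)) with hS₁
        set S₂ : Finset ι := S.filter (fun i => Disjoint (vbl i) (vbl j)) with hS₂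
        have hS₁D : S₁.card ≤ D := by
          refine le_trans (Finset.card_le_card ?_) (hdeg j)
          intro i hi
          rw [hS₁, mem_filter] at hi
          simp only [mem_filter, mem_univ, true_and]
          exact ⟨fun h => hj (h ▸ hi.1), hi.2⟩
        have hunion : S₂ ∪ S₁ = S := Finset.filter_union_filter_not_eq _ S
        -- chaining
        have chain : ∀ T : Finset ι, T ⊆ S₁ →
            (1 - x) ^ T.card * ((good E S₂).card : ℝ) ≤ (good E (S₂ ∪ T)).card := by
          intro T
          induction T using Finset.induction_on with
          | empty => intro _; simp
          | @insert a T ha IHT =>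
            intro hsub
            have haS₁ : a ∈ S₁ := hsub (mem_insert_self a T)
            have hTsub : T ⊆ S₁ := (Finset.insert_subset_iff.mp hsub).2
            have haS : a ∈ S := (Finset.filter_subset _ _) haS₁
            have haS₂T : a ∉ S₂ ∪ T := by
              rw [mem_union]
              rintro (h | h)
              · rw [hS₂, mem_filter] at h
                rw [hS₁, mem_filter] at haS₁
                exact haS₁.2 h.2
              · exact ha h
            have hcard : (S₂ ∪ T).card ≤ n := by
              have h1 : S₂ ∪ T ⊆ S.erase a := by
                intro i hi
                refine mem_erase.mpr ⟨fun he => haS₂T (he ▸ hi), ?_⟩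
                rcases mem_union.mp hi with h | h
                · exact (Finset.filter_subset _ _) h
                · exact (Finset.filter_subset _ _) (hTsub h)
              have h2 := card_le_card h1
              rw [card_erase_of_mem haS] at h2
              omega
            have hIHkey := IH (S₂ ∪ T) hcard a haS₂T
            have IHT' := IHT hTsub
            rw [Finset.union_insert, good_card_insert]
            have hGnn : (0:ℝ) ≤ ((good E (S₂ ∪ T)).card : ℝ) := Nat.cast_nonneg _
            have hxG : x * ((good E (S₂ ∪ T)).card : ℝ)
                = ((good E (S₂ ∪ T)).card : ℝ) / ((D:ℝ)+1) := by
              rw [hx]; ring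
            have hI : ((E a ∩ good E (S₂ ∪ T)).card : ℝ)
                ≤ x * ((good E (S₂ ∪ T)).card : ℝ) := by
              rw [hxG, le_div_iff₀ hD1pos]; exact hIHkey
            have hstep : (1 - x) * ((good E (S₂ ∪ T)).card : ℝ)
                ≤ ((good E (S₂ ∪ T)).card : ℝ) - ((E a ∩ good E (S₂ ∪ T)).card : ℝ) := by
              nlinarith
            calc (1 - x) ^ (insert a T).card * ((good E S₂).card : ℝ)
                = (1 - x) * ((1 - x) ^ T.card * ((good E S₂).card : ℝ)) := by
                  rw [card_insert_of_notMem ha]; ring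
              _ ≤ (1 - x) * ((good E (S₂ ∪ T)).card : ℝ) := by nlinarith
              _ ≤ _ := hstep
        have hchainS := chain S₁ (Finset.Subset.refl _)
        rw [hunion] at hchainS
        have hG2 : ((good E S₂).card : ℝ) ≤ Real.exp 1 * ((good E S).card : ℝ) := by
          have h7 : (1 - x) ^ D ≤ (1 - x) ^ S₁.card :=
            pow_le_pow_of_le_one h1x.le (by linarith) hS₁D
          have hG2nn : (0:ℝ) ≤ ((good E S₂).card : ℝ) := Nat.cast_nonneg _
          have h8 : Real.exp (-1) * ((good E S₂).card : ℝ) ≤ ((good E S).card : ℝ) := by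
            calc Real.exp (-1) * ((good E S₂).card : ℝ)
                ≤ (1 - x) ^ S₁.card * ((good E S₂).card : ℝ) := by nlinarith [hpow.trans h7]
              _ ≤ _ := hchainS
          have hee : Real.exp 1 * Real.exp (-1) = 1 := by
            rw [← Real.exp_add]; norm_num
          nlinarith
        -- independence
        set W : Finset ν := S₂.biUnion vbl with hW
        have hdisj : Disjoint (vbl j) W := by
          rw [hW, Finset.disjoint_biUnion_right]
          intro i hi
          rw [hS₂, mem_filter] at hi
          exact hi.2.symm
        have hdetW : Det W (good E S₂) := by
          intro f g hfg
          simp only [good, mem_filter, mem_univ, true_and]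
          have hiff : ∀ i ∈ S₂, (f ∈ E i ↔ g ∈ E i) := by
            intro i hi
            exact hdet i f g (fun t ht => hfg t (mem_biUnion.mpr ⟨i, hi, ht⟩))
          constructor
          · intro h i hi hg2
            exact h i hi ((hiff i hi).mpr hg2)
          · intro h i hi hf2
            exact h i hi ((hiff i hi).mp hf2)
        have hind := indep (vbl j) W hdisj (E j) (good E S₂) (hdet j) hdetW
        have hindR : ((E j ∩ good E S₂).card : ℝ) * Ω
            = ((E j).card : ℝ) * ((good E S₂).card : ℝ) := by
          rw [hΩ]; exact_mod_cast hind
        have hsub2 : E j ∩ good E S ⊆ E j ∩ good E S₂ := by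
          refine inter_subset_inter (Finset.Subset.refl _) (good_anti E ?_)
          rw [← hunion]; exact subset_union_left
        have hA : ((E j ∩ good E S).card : ℝ) ≤ ((E j ∩ good E S₂).card : ℝ) := by
          exact_mod_cast card_le_card hsub2
        have hpj := hp j
        have hG2nn : (0:ℝ) ≤ ((good E S₂).card : ℝ) := Nat.cast_nonneg _
        have step1 : ((E j ∩ good E S₂).card : ℝ) * ((D:ℝ)+1) * (Real.exp 1 * Ω)
            ≤ ((good E S).card : ℝ) * (Real.exp 1 * Ω) := by
          have u1 : ((E j ∩ good E S₂).card : ℝ) * ((D:ℝ)+1) * (Real.exp 1 * Ω)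
              = (((E j).card : ℝ) * (Real.exp 1 * ((D:ℝ)+1))) * ((good E S₂).card : ℝ) := by
            linear_combination (Real.exp 1 * ((D:ℝ)+1)) * hindR
          rw [u1]
          calc (((E j).card : ℝ) * (Real.exp 1 * ((D:ℝ)+1))) * ((good E S₂).card : ℝ)
              ≤ Ω * ((good E S₂).card : ℝ) := mul_le_mul_of_nonneg_right hpj hG2nn
            _ ≤ Ω * (Real.exp 1 * ((good E S).card : ℝ)) :=
                mul_le_mul_of_nonneg_left hG2 hΩpos.le
            _ = ((good E S).card : ℝ) * (Real.exp 1 * Ω) := by ring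
        have step2 : ((E j ∩ good E S₂).card : ℝ) * ((D:ℝ)+1) ≤ ((good E S).card : ℝ) :=
          le_of_mul_le_mul_right step1 (by positivity)
        calc ((E j ∩ good E S).card : ℝ) * ((D:ℝ)+1)
            ≤ ((E j ∩ good E S₂).card : ℝ) * ((D:ℝ)+1) :=
              mul_le_mul_of_nonneg_right hA hD1pos.le
          _ ≤ _ := step2
  -- positivity of good
  have goodpos : ∀ S : Finset ι, (0:ℝ) < ((good E S).card : ℝ) := by
    intro S
    induction S using Finset.induction_on with
    | empty =>
      have : good E (∅ : Finset ι) = univ := by simp [good]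
      rw [this, ← hΩ]; exact hΩpos
    | @insert a S ha IH =>
      rw [good_card_insert]
      have hkey := key S.card S le_rfl a ha
      have hInn : (0:ℝ) ≤ ((E a ∩ good E S).card : ℝ) := Nat.cast_nonneg _
      nlinarith [mul_nonneg hInn (by linarith [hD1] : (0:ℝ) ≤ (D:ℝ) - 1)]
  have hne : (good E univ).Nonempty := by
    rw [← Finset.card_pos]
    exact_mod_cast goodpos univ
  obtain ⟨f, hf⟩ := hne
  refine ⟨f, fun j => ?_⟩
  simp only [good, mem_filter] at hf
  exact hf.2 j (mem_univ j)

end LLL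

open Finset

section App

variable {N nX nZ : ℕ}

/-- functions constantly `c` on `T` -/
def ConstOn {ν V : Type*} [Fintype ν] [DecidableEq ν] [Fintype V] [DecidableEq V]
    (T : Finset ν) (c : V) : Finset (ν → V) :=
  univ.filter fun κ : ν → V => ∀ t ∈ T, κ t = c

lemma mem_ConstOn {ν V : Type*} [Fintype ν] [DecidableEq ν] [Fintype V] [DecidableEq V]
    {T : Finset ν} {c : V} {κ : ν → V} : κ ∈ ConstOn T c ↔ ∀ t ∈ T, κ t = c := by
  simp [ConstOn]

/-- counting functions constrained on a finset -/
lemma cnt {ν V : Type*} [Fintype ν] [DecidableEq ν] [Fintype V] [DecidableEq V]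
    (T : Finset ν) (c : V) :
    (ConstOn T c).card = Fintype.card V ^ (Fintype.card ν - T.card) := by
  rw [ConstOn, ← Fintype.card_subtype]
  have e : {κ : ν → V // ∀ t ∈ T, κ t = c} ≃ ({i : ν // i ∉ T} → V) :=
    { toFun := fun κ i => κ.1 i.1
      invFun := fun g => ⟨fun i => if h : i ∈ T then c else g ⟨i, h⟩,
        fun t ht => by simp [ht]⟩
      left_inv := by
        rintro ⟨κ, hκ⟩
        ext i
        by_cases h : i ∈ T
        · simp [h, hκ i h]
        · simp [h]
      right_inv := by
        intro g
        funext i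
        simp [i.2] }
  rw [Fintype.card_congr e, Fintype.card_fun]
  congr 1
  rw [Fintype.card_subtype_compl, Fintype.card_coe]

variable (HZ : Matrix (Fin nZ) (Fin N) (ZMod 2))

/-- support of column `p` of `HZ` -/
def Sp (p : Fin N) : Finset (Fin nZ) := univ.filter fun R => HZ R p ≠ 0

lemma Sp_card_le (p : Fin N) : (Sp HZ p).card ≤ maxColW HZ :=
  Finset.le_sup (f := fun j => wt fun i => HZ i j) (mem_univ p)

/-- bad event for column `p` -/
def Ev (w l : ℕ) (p : Fin N) : Finset (Fin nZ → Fin l) :=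
  univ.filter fun κ => ∃ k : Fin l, w + 1 ≤ ((Sp HZ p).filter fun R => κ R = k).card

lemma Ev_det (w l : ℕ) (p : Fin N) : Det (Sp HZ p) (Ev HZ w l p) := by
  intro f g hfg
  simp only [Ev, mem_filter, mem_univ, true_and]
  have h : ∀ k : Fin l, (Sp HZ p).filter (fun R => f R = k)
      = (Sp HZ p).filter (fun R => g R = k) := by
    intro k
    apply Finset.filter_congr
    intro R hR
    rw [hfg R hR]
  constructor
  · rintro ⟨k, hk⟩; exact ⟨k, (h k) ▸ hk⟩
  · rintro ⟨k, hk⟩; exact ⟨k, (h k).symm ▸ hk⟩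

lemma Ev_card_le (w l : ℕ) (p : Fin N) :
    (Ev HZ w l p).card
      ≤ (Sp HZ p).card.choose (w + 1) * (l * l ^ (nZ - (w + 1))) := by
  have hsub : Ev HZ w l p ⊆ ((Sp HZ p).powersetCard (w + 1)).biUnion
      (fun T => (univ : Finset (Fin l)).biUnion
        (fun c => ConstOn T c)) := by
    intro κ hκ
    simp only [Ev, mem_filter, mem_univ, true_and] at hκ
    obtain ⟨k, hk⟩ := hκ
    obtain ⟨T, hT, hTcard⟩ := Finset.exists_subset_card_eq hk
    rw [mem_biUnion]
    refine ⟨T, ?_, ?_⟩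
    · exact mem_powersetCard.mpr ⟨hT.trans (filter_subset _ _), hTcard⟩
    · rw [mem_biUnion]
      exact ⟨k, mem_univ _, mem_ConstOn.mpr fun t ht => (mem_filter.mp (hT ht)).2⟩
  calc (Ev HZ w l p).card ≤ _ := card_le_card hsub
    _ ≤ ∑ T ∈ (Sp HZ p).powersetCard (w + 1), ((univ : Finset (Fin l)).biUnion
        (fun c => ConstOn T c)).card :=
      card_biUnion_le
    _ ≤ ∑ T ∈ (Sp HZ p).powersetCard (w + 1), (l * l ^ (nZ - (w + 1))) := by
      apply Finset.sum_le_sum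
      intro T hT
      calc _ ≤ ∑ c : Fin l, (ConstOn T c).card := card_biUnion_le
        _ = ∑ _c : Fin l, l ^ (nZ - (w + 1)) := by
          apply Finset.sum_congr rfl
          intro c _
          rw [cnt T c, Fintype.card_fin, Fintype.card_fin,
            (mem_powersetCard.mp hT).2]
        _ = l * l ^ (nZ - (w + 1)) := by
          rw [Finset.sum_const, card_univ, Fintype.card_fin, smul_eq_mul]
    _ = _ := by rw [Finset.sum_const, card_powersetCard, smul_eq_mul]

lemma wt_sum {A B : Type*} [Fintype A] [Fintype B] (v : (A ⊕ B) → ZMod 2) :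
    wt v = wt (v ∘ Sum.inl) + wt (v ∘ Sum.inr) := by
  simp only [wt, Finset.card_filter, Fintype.sum_sum_type, Function.comp]

end App

section Main

variable {N nX nZ : ℕ}

lemma colbound (HX : Matrix (Fin nX) (Fin N) (ZMod 2)) (HZ : Matrix (Fin nZ) (Fin N) (ZMod 2))
    (w l : ℕ) (κ : Fin nZ → Fin l)
    (hκ : ∀ (p : Fin N) (k : Fin l), ((Sp HZ p).filter fun R => κ R = k).card ≤ w) :
    ∀ p : TQubit N nX l,
      wt (fun r => thickHZ HX HZ l κ r p) ≤ max (w + 2) (maxRowW HX) := by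
  rintro (⟨p₀, k₀⟩ | ⟨s₀, k₀⟩)
  · -- column (p₀, k₀)
    rw [wt_sum]
    have h1 : wt ((fun r => thickHZ HX HZ l κ r (Sum.inl (p₀, k₀))) ∘ Sum.inl) ≤ w := by
      refine le_trans (Finset.card_le_card ?_) (hκ p₀ k₀)
      intro R hR
      simp only [wt, mem_filter, mem_univ, true_and, Function.comp] at hR
      have hR' : (if k₀ = κ R then HZ R p₀ else 0) ≠ 0 := hR
      by_cases h : k₀ = κ R
      · rw [if_pos h] at hR'
        simp only [Sp, mem_filter, mem_univ, true_and]
        exact ⟨hR', h.symm⟩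
      · rw [if_neg h] at hR'; exact absurd rfl hR'
    have h2 : wt ((fun r => thickHZ HX HZ l κ r (Sum.inl (p₀, k₀))) ∘ Sum.inr) ≤ 2 := by
      set F₁ : Finset (Fin N × Fin (l - 1)) :=
        univ.filter (fun x => x.1 = p₀ ∧ k₀.val = x.2.val) with hF₁
      set F₂ : Finset (Fin N × Fin (l - 1)) :=
        univ.filter (fun x => x.1 = p₀ ∧ k₀.val = x.2.val + 1) with hF₂
      have hsub : (univ.filter fun x : Fin N × Fin (l - 1) =>
          ((fun r => thickHZ HX HZ l κ r (Sum.inl (p₀, k₀))) ∘ Sum.inr) x ≠ 0) ⊆ F₁ ∪ F₂ := by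
        intro x hx
        obtain ⟨p', k'⟩ := x
        simp only [mem_filter, mem_univ, true_and, Function.comp] at hx
        have hx' : (if p₀ = p' ∧ (k₀.val = k'.val ∨ k₀.val = k'.val + 1) then (1 : ZMod 2) else 0) ≠ 0 := hx
        by_cases h : p₀ = p' ∧ (k₀.val = k'.val ∨ k₀.val = k'.val + 1)
        · rcases h.2 with h2 | h2
          · exact mem_union_left _ (mem_filter.mpr ⟨mem_univ _, h.1.symm, h2⟩)
          · exact mem_union_right _ (mem_filter.mpr ⟨mem_univ _, h.1.symm, h2⟩)
        · rw [if_neg h] at hx'; exact absurd rfl hx'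
      have hc1 : F₁.card ≤ 1 := by
        rw [Finset.card_le_one]
        rintro ⟨a1, a2⟩ ha ⟨b1, b2⟩ hb
        simp only [hF₁, mem_filter] at ha hb
        have : a2 = b2 := Fin.ext (by omega)
        simp [ha.2.1, hb.2.1, this]
      have hc2 : F₂.card ≤ 1 := by
        rw [Finset.card_le_one]
        rintro ⟨a1, a2⟩ ha ⟨b1, b2⟩ hb
        simp only [hF₂, mem_filter] at ha hb
        have : a2 = b2 := Fin.ext (by omega)
        simp [ha.2.1, hb.2.1, this]
      calc wt _ ≤ (F₁ ∪ F₂).card := Finset.card_le_card hsub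
        _ ≤ F₁.card + F₂.card := card_union_le _ _
        _ ≤ 2 := by omega
    have := Nat.add_le_add h1 h2
    exact le_trans this (le_max_left _ _)
  · -- column (s₀, k₀)
    rw [wt_sum]
    have h1 : wt ((fun r => thickHZ HX HZ l κ r (Sum.inr (s₀, k₀))) ∘ Sum.inl) = 0 := by
      simp [wt, thickHZ, Function.comp]
    have h2 : wt ((fun r => thickHZ HX HZ l κ r (Sum.inr (s₀, k₀))) ∘ Sum.inr)
        ≤ maxRowW HX := by
      refine le_trans ?_ (Finset.le_sup (f := fun i => wt (HX i)) (mem_univ s₀))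
      unfold wt
      apply Finset.card_le_card_of_injOn (fun x => x.1)
      · rintro ⟨p', k'⟩ hx
        simp only [Finset.coe_filter, Set.mem_setOf_eq, mem_filter, mem_univ, true_and, Function.comp] at hx ⊢
        have hx' : (if k₀.val = k'.val then HX s₀ p' else 0) ≠ 0 := hx
        by_cases h : k₀.val = k'.val
        · rw [if_pos h] at hx'; exact hx'
        · rw [if_neg h] at hx'; exact absurd rfl hx'
      · rintro ⟨a1, a2⟩ ha ⟨b1, b2⟩ hb hab
        simp only [Finset.coe_filter, Set.mem_setOf_eq, mem_univ, true_and,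
          Function.comp] at ha hb
        have ha' : (if k₀.val = a2.val then HX s₀ a1 else 0) ≠ 0 := ha
        have hb' : (if k₀.val = b2.val then HX s₀ b1 else 0) ≠ 0 := hb
        have h2a : k₀.val = a2.val := by
          by_contra h; rw [if_neg h] at ha'; exact absurd rfl ha'
        have h2b : k₀.val = b2.val := by
          by_contra h; rw [if_neg h] at hb'; exact absurd rfl hb'
        simp only at hab
        have : a2 = b2 := Fin.ext (by omega)
        simp [hab, this]
    rw [h1, zero_add]
    exact le_trans h2 (le_max_right _ _)

end Main

/-- If `w ≥ 1` and `l ≥ max(2, q_Z)` satisfy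
`2·e·binom(q_Z, w+1)·(1/l)^{w+1}·min(q_Z·w_Z, N)·l ≤ 1`, then there is a choice function
`κ` for which every column of the Z-type generator matrix of the thickened code has weight
at most `max(w+2, w_X)`. -/
theorem stmt11 (HX : Matrix (Fin nX) (Fin N) (ZMod 2)) (HZ : Matrix (Fin nZ) (Fin N) (ZMod 2))
    (hCSS : HX * HZ.transpose = 0) (w l : ℕ) (hw : 1 ≤ w) (hl2 : 2 ≤ l)
    (hlq : maxColW HZ ≤ l)
    (hprob : 2 * Real.exp 1 * (Nat.choose (maxColW HZ) (w + 1) : ℝ) *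
        (1 / (l : ℝ)) ^ (w + 1) * ((min (maxColW HZ * maxRowW HZ) N : ℕ) : ℝ) * (l : ℝ)
      ≤ 1) :
    ∃ κ : Fin nZ → Fin l, ∀ p : TQubit N nX l,
      wt (fun r => thickHZ HX HZ l κ r p) ≤ max (w + 2) (maxRowW HX) := by
  set q := maxColW HZ with hq
  by_cases hqw : q ≤ w
  · -- trivial case: every column of HZ has weight ≤ w
    refine ⟨fun _ => ⟨0, by omega⟩, colbound HX HZ w l _ ?_⟩
    intro p k
    calc ((Sp HZ p).filter fun R => _ = k).card ≤ (Sp HZ p).card :=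
        card_le_card (filter_subset _ _)
      _ ≤ q := Sp_card_le HZ p
      _ ≤ w := hqw
  · push_neg at hqw
    have hq1 : w + 1 ≤ q := hqw
    have hN : 0 < N := by
      rcases Nat.eq_zero_or_pos N with h | h
      · exfalso
        subst h
        have : q = 0 := by
          rw [hq, maxColW]
          simp [Finset.univ_eq_empty]
        omega
      · exact h
    have hwZ : 1 ≤ maxRowW HZ := by
      have hne : (univ : Finset (Fin N)).Nonempty := ⟨⟨0, hN⟩, mem_univ _⟩
      obtain ⟨j, -, hj⟩ := Finset.exists_mem_eq_sup univ hne (fun j => wt fun i => HZ i j)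
      have hcol : 1 ≤ wt (fun i => HZ i j) := by
        have : q = wt (fun i => HZ i j) := by rw [hq, maxColW, hj]
        omega
      obtain ⟨R, hR⟩ : (univ.filter fun i => HZ i j ≠ 0).Nonempty := by
        rw [← Finset.card_pos]
        have : wt (fun i => HZ i j) = (univ.filter fun i => HZ i j ≠ 0).card := rfl
        omega
      have hpos : 0 < wt (HZ R) :=
        Finset.card_pos.mpr ⟨j, mem_filter.mpr ⟨mem_univ _, (mem_filter.mp hR).2⟩⟩
      exact le_trans hpos (Finset.le_sup (f := fun i => wt (HZ i)) (mem_univ R))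
    have hqnZ : q ≤ nZ := by
      rw [hq, maxColW]
      apply Finset.sup_le
      intro j _
      calc wt (fun i => HZ i j) ≤ (univ : Finset (Fin nZ)).card :=
          card_le_card (filter_subset _ _)
        _ = nZ := by rw [card_univ, Fintype.card_fin]
    have hnZw : w + 1 ≤ nZ := le_trans hq1 hqnZ
    set M : ℕ := min (q * maxRowW HZ) N with hM
    have hM1 : 1 ≤ M := by
      rw [hM]
      exact le_min (Nat.one_le_iff_ne_zero.mpr (Nat.mul_ne_zero (by omega) (by omega))) hN
    set D : ℕ := max (M - 1) 1 with hD
    have hD1 : 1 ≤ D := le_max_right _ _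
    have hlpos : (0:ℝ) < (l:ℝ) := by exact_mod_cast (by omega : 0 < l)
    -- key real inequality
    have hkey : 2 * Real.exp 1 * (q.choose (w + 1) : ℝ) * (M : ℝ) ≤ (l:ℝ) ^ w := by
      have heq : 2 * Real.exp 1 * (q.choose (w + 1) : ℝ) * (M : ℝ)
          = (2 * Real.exp 1 * (q.choose (w + 1) : ℝ) * (1 / (l : ℝ)) ^ (w + 1)
              * (M : ℝ) * (l : ℝ)) * (l:ℝ) ^ w := by
        have hl0 : (l:ℝ) ^ w * l * ((l:ℝ) ^ w * l)⁻¹ = 1 :=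
          mul_inv_cancel₀ (mul_pos (pow_pos hlpos w) hlpos).ne'
        linear_combination (-(2 * Real.exp 1 * (q.choose (w + 1) : ℝ) * (M : ℝ))) * hl0
      rw [heq]
      calc _ ≤ 1 * (l:ℝ) ^ w :=
          mul_le_mul_of_nonneg_right hprob (by positivity)
        _ = (l:ℝ) ^ w := one_mul _
    -- LLL hypotheses
    haveI : Nonempty (Fin l) := ⟨⟨0, by omega⟩⟩
    have hdeg : ∀ p : Fin N,
        (univ.filter fun p' => p' ≠ p ∧ ¬ Disjoint (Sp HZ p') (Sp HZ p)).card ≤ D := by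
      intro p
      by_cases hSp : (Sp HZ p).Nonempty
      · have hsub : univ.filter (fun p' => p' ≠ p ∧ ¬Disjoint (Sp HZ p') (Sp HZ p))
            ⊆ ((Sp HZ p).biUnion (fun R => univ.filter fun p' => HZ R p' ≠ 0)).erase p := by
          intro p' hp'
          rw [mem_filter] at hp'
          obtain ⟨-, hne, hnd⟩ := hp'
          obtain ⟨R, hR1, hR2⟩ := Finset.not_disjoint_iff.mp hnd
          refine mem_erase.mpr ⟨hne, mem_biUnion.mpr ⟨R, hR2, ?_⟩⟩
          exact mem_filter.mpr ⟨mem_univ _, (mem_filter.mp hR1).2⟩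
        have hpin : p ∈ (Sp HZ p).biUnion (fun R => univ.filter fun p' => HZ R p' ≠ 0) := by
          obtain ⟨R, hR⟩ := hSp
          exact mem_biUnion.mpr ⟨R, hR, mem_filter.mpr ⟨mem_univ _, (mem_filter.mp hR).2⟩⟩
        have hbU : ((Sp HZ p).biUnion fun R => univ.filter fun p' => HZ R p' ≠ 0).card
            ≤ q * maxRowW HZ := by
          calc _ ≤ ∑ R ∈ Sp HZ p, (univ.filter fun p' => HZ R p' ≠ 0).card :=
              card_biUnion_le
            _ ≤ ∑ _R ∈ Sp HZ p, maxRowW HZ := Finset.sum_le_sum fun R _ =>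
                Finset.le_sup (f := fun i => wt (HZ i)) (mem_univ R)
            _ = (Sp HZ p).card * maxRowW HZ := by rw [Finset.sum_const, smul_eq_mul]
            _ ≤ q * maxRowW HZ := Nat.mul_le_mul_right _ (Sp_card_le HZ p)
        have h1 := card_le_card hsub
        rw [card_erase_of_mem hpin] at h1
        have h2 : (univ.filter fun p' => p' ≠ p ∧ ¬Disjoint (Sp HZ p') (Sp HZ p)).card
            ≤ N - 1 := by
          have hsub2 : univ.filter (fun p' => p' ≠ p ∧ ¬Disjoint (Sp HZ p') (Sp HZ p))
              ⊆ univ.erase p := by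
            intro p' hp'
            exact mem_erase.mpr ⟨(mem_filter.mp hp').2.1, mem_univ _⟩
          have := card_le_card hsub2
          rw [card_erase_of_mem (mem_univ p), card_univ, Fintype.card_fin] at this
          exact this
        omega
      · rw [Finset.not_nonempty_iff_eq_empty] at hSp
        have : (univ.filter fun p' => p' ≠ p ∧ ¬Disjoint (Sp HZ p') (Sp HZ p)) = ∅ := by
          apply Finset.filter_false_of_mem
          rintro p' - ⟨-, hnd⟩
          exact hnd (by rw [hSp]; exact disjoint_empty_right _)
        rw [this, card_empty]
        omega
    have hp : ∀ p : Fin N, ((Ev HZ w l p).card : ℝ) * (Real.exp 1 * ((D:ℝ) + 1))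
        ≤ ((univ : Finset (Fin nZ → Fin l)).card : ℝ) := by
      intro p
      have hEc : (Ev HZ w l p).card ≤ q.choose (w + 1) * (l * l ^ (nZ - (w + 1))) :=
        le_trans (Ev_card_le HZ w l p)
          (Nat.mul_le_mul_right _ (Nat.choose_le_choose _ (Sp_card_le HZ p)))
      have hcardU : ((univ : Finset (Fin nZ → Fin l)).card : ℝ) = (l:ℝ) ^ nZ := by
        rw [card_univ, Fintype.card_fun, Fintype.card_fin, Fintype.card_fin]
        push_cast
        ring
      rw [hcardU]
      have hEcR : ((Ev HZ w l p).card : ℝ)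
          ≤ (q.choose (w + 1) : ℝ) * ((l:ℝ) * (l:ℝ) ^ (nZ - (w + 1))) := by
        exact_mod_cast hEc
      have hlnz : (l:ℝ) * (l:ℝ) ^ (nZ - (w + 1)) = (l:ℝ) ^ (nZ - w) := by
        rw [← pow_succ']
        congr 1
        omega
      have hD2M : (D:ℝ) + 1 ≤ 2 * (M:ℝ) := by exact_mod_cast (by omega : D + 1 ≤ 2 * M)
      have hMnn : (0:ℝ) ≤ (M:ℝ) := Nat.cast_nonneg _
      have hCnn : (0:ℝ) ≤ (q.choose (w + 1) : ℝ) := Nat.cast_nonneg _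
      calc ((Ev HZ w l p).card : ℝ) * (Real.exp 1 * ((D:ℝ) + 1))
          ≤ ((q.choose (w + 1) : ℝ) * (l:ℝ) ^ (nZ - w)) * (Real.exp 1 * (2 * (M:ℝ))) := by
            apply mul_le_mul
            · rw [← hlnz]; exact hEcR
            · exact mul_le_mul_of_nonneg_left hD2M (Real.exp_pos 1).le
            · positivity
            · positivity
        _ = (2 * Real.exp 1 * (q.choose (w + 1) : ℝ) * (M:ℝ)) * (l:ℝ) ^ (nZ - w) := by ring
        _ ≤ (l:ℝ) ^ w * (l:ℝ) ^ (nZ - w) :=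
            mul_le_mul_of_nonneg_right hkey (by positivity)
        _ = (l:ℝ) ^ nZ := by rw [← pow_add]; congr 1; omega
    obtain ⟨κ, hκ⟩ := LLL (Sp HZ) (Ev HZ w l) (Ev_det HZ w l) D hD1 hdeg hp
    refine ⟨κ, colbound HX HZ w l κ ?_⟩
    intro p k
    have h := hκ p
    simp only [Ev, mem_filter, mem_univ, true_and, not_exists, not_le] at h
    exact Nat.lt_succ_iff.mp (h k)
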